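/- A partitioned formula φ(x;y) has the tree property of the first kind in a complete first-order theory T if and only if for every n<ω the formula φ exhibits in T the pattern (C_n, I_n) indexed by the finite tree n^{<n} (sequences from n of length <n), where C_n = {({f↾i : i<n}, ∅) : f ∈ n^n} and I_n = {({η, μ}, ∅) : η, μ ∈ n^{<n} incomparable in the tree order}. -/

import Mathlib

open FirstOrder Language Set

universe u v w

/-- A partitioned formula `φ(x;y)` (object variables `α`, parameter variables `β`)
exhibits the pattern `(C, I)` (indexed by `S`) in the theory `T`. -/
def ExhibitsPattern {L : FirstOrder.Language.{u, v}} (T : L.Theory) {α β S : Type*}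
    (φ : L.Formula (α ⊕ β)) (C I : Set (Set S × Set S)) : Prop :=
  ∃ (M : Theory.ModelType.{u, v, w} T) (b : S → β → M),
    (∀ p ∈ C, ∃ a : α → M,
      (∀ i ∈ p.1, φ.Realize (Sum.elim a (b i))) ∧
      (∀ j ∈ p.2, ¬ φ.Realize (Sum.elim a (b j)))) ∧
    (∀ p ∈ I, ¬ ∃ a : α → M,
      (∀ i ∈ p.1, φ.Realize (Sum.elim a (b i))) ∧
      (∀ j ∈ p.2, ¬ φ.Realize (Sum.elim a (b j))))

/-- `(C, I)` is a pattern: the condition `(∅, ∅)` is excluded. -/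
def IsPattern {S : Type*} (C I : Set (Set S × Set S)) : Prop :=
  (∅, ∅) ∉ C ∧ (∅, ∅) ∉ I

/-- A pattern is exhibitable if some partitioned formula of some complete
first-order theory exhibits it. -/
def Exhibitable {S : Type*} (C I : Set (Set S × Set S)) : Prop :=
  ∃ (L : FirstOrder.Language.{0, 0}) (T : L.Theory) (_ : T.IsComplete) (α β : Type)
    (φ : L.Formula (α ⊕ β)), ExhibitsPattern.{0, 0, 0} T φ C I

/-- The finite tree `n^{<n}`: sequences from `n` of length `< n`. -/
def FinTree (n : ℕ) : Type := {l : List (Fin n) // l.length < n}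

/-- `φ(x;y)` has the tree property of the first kind in `T`. -/
def HasTP1 {L : FirstOrder.Language.{u, v}} (T : L.Theory) {α β : Type*}
    (φ : L.Formula (α ⊕ β)) : Prop :=
  ∃ (M : Theory.ModelType.{u, v, w} T) (b : List ℕ → β → M),
    (∀ f : ℕ → ℕ, ∀ m : ℕ, ∃ a : α → M,
      ∀ i < m, φ.Realize (Sum.elim a (b ((List.range i).map f)))) ∧
    (∀ η μ : List ℕ, ¬ η <+: μ → ¬ μ <+: η →
      ¬ ∃ a : α → M, φ.Realize (Sum.elim a (b η)) ∧ φ.Realize (Sum.elim a (b μ)))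

private lemma isPrefix_of_map_isPrefix {γ δ : Type*} {f : γ → δ} (hf : Function.Injective f)
    {l₁ l₂ : List γ} (h : l₁.map f <+: l₂.map f) : l₁ <+: l₂ := by
  rw [List.prefix_iff_eq_take] at h ⊢
  rw [List.length_map, ← List.map_take] at h
  exact List.map_injective_iff.2 hf h

/-- Embed a list of naturals into `FinTree n` by reducing entries mod `n`. -/
private def emb {n : ℕ} (η : List ℕ) (h : η.length < n) : FinTree n :=
  ⟨η.map fun x => ⟨x % n, Nat.mod_lt x (Nat.lt_of_le_of_lt (Nat.zero_le _) h)⟩,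
    by simpa using h⟩

private lemma emb_val {n : ℕ} {η : List ℕ} (h : η.length < n) (he : ∀ x ∈ η, x < n) :
    (emb η h).1.map Fin.val = η := by
  simp only [emb, List.map_map, Function.comp_def]
  exact (List.map_congr_left fun x hx => Nat.mod_eq_of_lt (he x hx)).trans (List.map_id η)

/-- The per-`n` truncation of `f : ℕ → ℕ` to a function `Fin n → Fin n`. -/
private def truncF (n : ℕ) (f : ℕ → ℕ) : Fin n → Fin n :=
  fun k => ⟨f k % n, Nat.mod_lt _ k.pos⟩

private lemma emb_mem_path {n i : ℕ} (f : ℕ → ℕ) (hi : i < n)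
    (h : ((List.range i).map f).length < n) :
    (emb ((List.range i).map f) h).1 = (List.ofFn (truncF n f)).take i := by
  apply List.ext_getElem
  · simp [emb, Nat.le_of_lt hi]
  · intro j h1 h2
    simp [emb, truncF]

/-- `φ(x;y)` has the tree property of the first kind in the complete theory `T`
iff for every `n < ω` it exhibits the pattern `(C_n, I_n)` indexed by the finite tree `n^{<n}`,
where `C_n` consists of the paths and `I_n` of the pairs of incomparable nodes. -/
theorem tree_property_first_kind_iff_exhibits_patterns
    {L : FirstOrder.Language.{u, v}} (T : L.Theory) (hT : T.IsComplete)
    {α β : Type*} (φ : L.Formula (α ⊕ β)) :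
    HasTP1.{u, v, w} T φ ↔
      ∀ n : ℕ, ExhibitsPattern.{u, v, w} T φ
        {p : Set (FinTree n) × Set (FinTree n) | ∃ f : Fin n → Fin n,
          p = ({s : FinTree n | ∃ i : ℕ, s.1 = (List.ofFn f).take i}, ∅)}
        {p : Set (FinTree n) × Set (FinTree n) | ∃ η μ : FinTree n,
          ¬ η.1 <+: μ.1 ∧ ¬ μ.1 <+: η.1 ∧ p = ({η, μ}, ∅)} := by
  constructor
  · -- forward direction
    rintro ⟨M, b, hcons, hinc⟩ n
    refine ⟨M, fun s => b (s.1.map Fin.val), ?_, ?_⟩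
    · rintro p ⟨f, rfl⟩
      set g : ℕ → ℕ := fun i => if h : i < n then (f ⟨i, h⟩ : ℕ) else 0 with hg
      obtain ⟨a, ha⟩ := hcons g n
      refine ⟨a, ?_, fun j hj => hj.elim⟩
      rintro s ⟨i, hs⟩
      have hkey : s.1.map Fin.val = (List.range s.1.length).map g := by
        apply List.ext_getElem
        · simp
        · intro j h1 h2
          have hj' : j < s.1.length := by simpa using h1
          have hjn : j < n := lt_trans hj' s.2
          simp only [List.getElem_map, List.getElem_range, hg, dif_pos hjn]
          have : s.1[j] = f ⟨j, hjn⟩ := by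
            have := List.getElem_of_eq hs hj'
            simpa using this
          rw [this]
      show φ.Realize (Sum.elim a (b (s.1.map Fin.val)))
      rw [hkey]
      exact ha _ s.2
    · rintro p ⟨η, μ, h1, h2, rfl⟩ ⟨a, ha, -⟩
      refine hinc (η.1.map Fin.val) (μ.1.map Fin.val)
        (fun hp => h1 (isPrefix_of_map_isPrefix Fin.val_injective hp))
        (fun hp => h2 (isPrefix_of_map_isPrefix Fin.val_injective hp))
        ⟨a, ha η (by simp), ha μ (by simp)⟩
  · -- backward direction: ultraproduct
    intro h
    unfold ExhibitsPattern at h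
    choose M b hC hI using h
    set uf : Ultrafilter ℕ := Filter.hyperfilter ℕ with huf
    haveI : ∀ n : ℕ, Nonempty (M n) := fun n => inferInstance
    let P : Type w := (uf : Filter ℕ).Product (fun n => (M n : Type w))
    haveI : T.Model P := by
      rw [Theory.model_iff]
      intro ψ hψ
      exact (Ultraproduct.sentence_realize ψ).2
        (Filter.Eventually.of_forall fun n => T.realize_sentence_of_mem (M := (M n : Type w)) hψ)
    -- representative function for the parameters
    let brep : List ℕ → β → ∀ n : ℕ, (M n : Type w) := fun η v n =>
      if h : η.length < n then b n (emb η h) v else Classical.choice inferInstance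
    let bb : List ℕ → β → P := fun η v => (↑(brep η v) : P)
    -- witnesses along paths
    have hA : ∀ n : ℕ, ∀ f : ℕ → ℕ, ∃ a : α → M n,
        ∀ s ∈ {s : FinTree n | ∃ i : ℕ, s.1 = (List.ofFn (truncF n f)).take i},
          φ.Realize (Sum.elim a (b n s)) := by
      intro n f
      obtain ⟨a, ha, -⟩ := hC n _ ⟨truncF n f, rfl⟩
      exact ⟨a, ha⟩
    choose A hA using hA
    refine ⟨⟨P⟩, bb, ?_, ?_⟩
    · -- consistency of paths
      intro f m
      refine ⟨fun v => (↑(fun n => A n f v) : P), ?_⟩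
      intro i him
      set x : (α ⊕ β) → ∀ n : ℕ, (M n : Type w) :=
        Sum.elim (fun v n => A n f v) (brep ((List.range i).map f)) with hx
      have hval : (Sum.elim (fun v => (↑(fun n => A n f v) : P))
          (bb ((List.range i).map f))) = fun s => (↑(x s) : P) := by
        funext s; cases s <;> rfl
      refine (congrArg (Formula.Realize (M := P) φ) hval).mpr
        ((Ultraproduct.realize_formula_cast φ x).mpr ?_)
      have hev : ∀ᶠ n in (uf : Filter ℕ), m ≤ n :=
        Nat.hyperfilter_le_atTop (Filter.eventually_ge_atTop m)
      filter_upwards [hev] with n hn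
      have hlen : ((List.range i).map f).length < n := by simp; omega
      have hxn : (fun s => x s n) =
          Sum.elim (fun v => A n f v) (b n (emb ((List.range i).map f) hlen)) := by
        funext s
        cases s with
        | inl v => rfl
        | inr v => simp only [hx, Sum.elim_inr, brep, dif_pos hlen]
      rw [hxn]
      exact hA n f _ ⟨i, emb_mem_path f (by omega) hlen⟩
    · -- incomparability
      intro η μ h1 h2
      rintro ⟨a, ra, rμ⟩
      choose aR haR using fun v : α => Quotient.exists_rep (a v)
      set xη : (α ⊕ β) → ∀ n : ℕ, (M n : Type w) := Sum.elim aR (brep η) with hxη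
      set xμ : (α ⊕ β) → ∀ n : ℕ, (M n : Type w) := Sum.elim aR (brep μ) with hxμ
      have hvalη : (Sum.elim a (bb η)) = fun s => (↑(xη s) : P) := by
        funext s; cases s with | inl v => exact (haR v).symm | inr v => rfl
      have hvalμ : (Sum.elim a (bb μ)) = fun s => (↑(xμ s) : P) := by
        funext s; cases s with | inl v => exact (haR v).symm | inr v => rfl
      rw [hvalη] at ra
      change Formula.Realize (M := P) φ (fun s => (↑(xη s) : P)) at ra
      replace ra := (Ultraproduct.realize_formula_cast φ xη).mp ra
      rw [hvalμ] at rμ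
      change Formula.Realize (M := P) φ (fun s => (↑(xμ s) : P)) at rμ
      replace rμ := (Ultraproduct.realize_formula_cast φ xμ).mp rμ
      set B : ℕ := η.length + μ.length + η.sum + μ.sum + 1 with hB
      have hev : ∀ᶠ n in (uf : Filter ℕ), B ≤ n :=
        Nat.hyperfilter_le_atTop (Filter.eventually_ge_atTop B)
      obtain ⟨n, rηn, rμn, hBn⟩ := (ra.and (rμ.and hev)).exists
      have hηlen : η.length < n := by omega
      have hμlen : μ.length < n := by omega
      have hηe : ∀ x ∈ η, x < n := fun x hx =>
        lt_of_le_of_lt (List.single_le_sum (fun _ _ => Nat.zero_le _) x hx) (by omega)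
      have hμe : ∀ x ∈ μ, x < n := fun x hx =>
        lt_of_le_of_lt (List.single_le_sum (fun _ _ => Nat.zero_le _) x hx) (by omega)
      have hp1 : ¬ (emb η hηlen).1 <+: (emb μ hμlen).1 := by
        intro hp
        apply h1
        have := hp.map Fin.val
        rwa [emb_val hηlen hηe, emb_val hμlen hμe] at this
      have hp2 : ¬ (emb μ hμlen).1 <+: (emb η hηlen).1 := by
        intro hp
        apply h2
        have := hp.map Fin.val
        rwa [emb_val hμlen hμe, emb_val hηlen hηe] at this
      apply hI n _ ⟨emb η hηlen, emb μ hμlen, hp1, hp2, rfl⟩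
      refine ⟨fun v => aR v n, ?_, fun j hj => hj.elim⟩
      rintro s hs
      rcases hs with hs | hs
      · subst hs
        have : (fun s => xη s n) = Sum.elim (fun v => aR v n) (b n (emb η hηlen)) := by
          funext s
          cases s with
          | inl v => rfl
          | inr v => simp only [hxη, Sum.elim_inr, brep, dif_pos hηlen]
        rw [← this]
        exact rηn
      · rcases hs with hs
        subst hs
        have : (fun s => xμ s n) = Sum.elim (fun v => aR v n) (b n (emb μ hμlen)) := by
          funext s
          cases s with
          | inl v => rfl
          | inr v => simp only [hxμ, Sum.elim_inr, brep, dif_pos hμlen]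
        rw [← this]
        exact rμn
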